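/- Let Γ be an n-crystallographic group and let G be a maximal virtually infinite cyclic subgroup of Γ × ℤ. Let π : Γ × ℤ → Γ be the projection. Then at least one of the following holds: (1) π restricted to G is injective, so G is isomorphic to the virtually infinite cyclic subgroup π(G) of Γ; or (2) G = F × ℤ (the subgroup π(G) × ℤ of Γ × ℤ), where F = π(G) is a maximal finite subgroup of Γ. -/
import Mathlib


noncomputable section

/-- Euclidean `n`-space. -/
abbrev E (n : ℕ) := EuclideanSpace ℝ (Fin n)

/-- The isometry group of Euclidean `n`-space (which equals `O(n) ⋉ ℝⁿ`). -/
abbrev Isom (n : ℕ) := E n ≃ᵢ E n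

/-- A subgroup of the isometry group of `ℝⁿ` is `n`-crystallographic if its action on `ℝⁿ`
is properly discontinuous and cocompact. -/
def IsCrystallographic {n : ℕ} (Γ : Subgroup (Isom n)) : Prop :=
  (∀ K L : Set (E n), IsCompact K → IsCompact L →
      {γ : Isom n | γ ∈ Γ ∧ (γ '' K ∩ L).Nonempty}.Finite) ∧
  ∃ K : Set (E n), IsCompact K ∧ ∀ x : E n, ∃ γ ∈ Γ, γ x ∈ K

/-- A line in `ℝⁿ`: a one-dimensional affine subspace. -/
def IsLine {n : ℕ} (l : Set (E n)) : Prop :=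
  ∃ p v : E n, v ≠ 0 ∧ l = {x | ∃ t : ℝ, x = p + t • v}

/-- A group is virtually infinite cyclic if it contains an infinite cyclic subgroup of
finite index. -/
def IsVirtuallyInfiniteCyclic (G : Type*) [Group G] : Prop :=
  ∃ H : Subgroup G, H.FiniteIndex ∧ Nonempty (H ≃* Multiplicative ℤ)

private lemma vic_congr {G H : Type*} [Group G] [Group H] (e : G ≃* H)
    (h : IsVirtuallyInfiniteCyclic G) : IsVirtuallyInfiniteCyclic H := by
  obtain ⟨K, hK, ⟨f⟩⟩ := h
  refine ⟨K.map e.toMonoidHom, ⟨?_⟩, ⟨(e.subgroupMap K).symm.trans f⟩⟩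
  rw [Subgroup.index_map_of_injective K e.injective,
    MonoidHom.range_eq_top.2 e.surjective, Subgroup.index_top, mul_one]
  exact hK.index_ne_zero

private lemma zpowers_fi (z : Multiplicative ℤ) (hz : z ≠ 1) :
    (Subgroup.zpowers z).FiniteIndex := by
  constructor
  have h : Subgroup.zpowers z = AddSubgroup.toSubgroup (AddSubgroup.zmultiples z.toAdd) := by
    ext x
    rw [Subgroup.mem_zpowers_iff]
    have hx : x ∈ AddSubgroup.toSubgroup (AddSubgroup.zmultiples z.toAdd) ↔
        x.toAdd ∈ AddSubgroup.zmultiples z.toAdd := Iff.rfl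
    rw [hx, AddSubgroup.mem_zmultiples_iff]
    constructor
    · rintro ⟨k, rfl⟩; exact ⟨k, by simp⟩
    · rintro ⟨k, hk⟩; exact ⟨k, by
        apply Multiplicative.toAdd.injective; simpa using hk⟩
  rw [h, AddSubgroup.index_toSubgroup, Int.index_zmultiples]
  simp only [ne_eq, Int.natAbs_eq_zero]
  intro h0
  exact hz (Multiplicative.toAdd.injective h0)

private lemma key_fi {G : Type*} [Group G] (hvc : IsVirtuallyInfiniteCyclic G)
    {g : G} (hg : ¬ IsOfFinOrder g) :
    ∃ k : ℕ, 0 < k ∧ (Subgroup.zpowers (g ^ k)).FiniteIndex := by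
  obtain ⟨H, hH, ⟨e⟩⟩ := hvc
  haveI : H.FiniteIndex := hH
  set k := H.normalCore.index with hk
  have hk0 : k ≠ 0 := Subgroup.FiniteIndex.index_ne_zero
  refine ⟨k, Nat.pos_of_ne_zero hk0, ?_⟩
  have hmemcore : g ^ k ∈ H.normalCore := H.normalCore.pow_index_mem g
  have hmem : g ^ k ∈ H := H.normalCore_le hmemcore
  have hne : g ^ k ≠ 1 := by
    intro h1
    exact hg (isOfFinOrder_iff_pow_eq_one.2 ⟨k, Nat.pos_of_ne_zero hk0, h1⟩)
  set h' : H := ⟨g ^ k, hmem⟩ with hh'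
  have hne' : h' ≠ 1 := fun h1 => hne (congrArg Subtype.val h1)
  have hez : e h' ≠ 1 := fun h1 => hne' (e.injective (by simpa using h1))
  have fi1 : (Subgroup.zpowers (e h')).FiniteIndex := zpowers_fi _ hez
  have fi2 : (Subgroup.zpowers h').FiniteIndex := by
    constructor
    have : ((Subgroup.zpowers h').map e.toMonoidHom).index = (Subgroup.zpowers h').index := by
      rw [Subgroup.index_map_of_injective _ e.injective,
        MonoidHom.range_eq_top.2 e.surjective, Subgroup.index_top, mul_one]
    rw [← this, MonoidHom.map_zpowers]
    exact fi1.index_ne_zero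
  constructor
  have hle : Subgroup.zpowers (g ^ k) ≤ H := Subgroup.zpowers_le.2 hmem
  rw [← Subgroup.relIndex_mul_index hle]
  apply mul_ne_zero
  · have hsub : (Subgroup.zpowers (g ^ k)).subgroupOf H = Subgroup.zpowers h' := by
      have hmap : (Subgroup.zpowers h').map H.subtype = Subgroup.zpowers (g ^ k) := by
        rw [MonoidHom.map_zpowers]; rfl
      rw [Subgroup.subgroupOf, ← hmap,
        Subgroup.comap_map_eq_self_of_injective H.subtype_injective]
    rw [Subgroup.relIndex, hsub]
    exact fi2.index_ne_zero
  · exact hH.index_ne_zero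

private lemma vic_prod (F : Type*) [Group F] [Finite F] :
    IsVirtuallyInfiniteCyclic (F × Multiplicative ℤ) := by
  refine ⟨(MonoidHom.fst F (Multiplicative ℤ)).ker, ⟨?_⟩, ⟨?_⟩⟩
  · rw [Subgroup.index_ker]
    exact Nat.card_pos.ne'
  · refine
      { toFun := fun x => x.1.2
        invFun := fun z => ⟨(1, z), MonoidHom.mem_ker.2 rfl⟩
        left_inv := ?_
        right_inv := fun z => rfl
        map_mul' := fun x y => rfl }
    rintro ⟨⟨a, b⟩, hx⟩
    have ha : a = 1 := MonoidHom.mem_ker.1 hx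
    subst ha
    rfl

private lemma mult_int_pow_ne (z : Multiplicative ℤ) (hz : z ≠ 1) (m : ℕ) (hm : 0 < m) :
    z ^ m ≠ 1 := by
  intro h
  have h1 : (m : ℤ) * z.toAdd = 0 := by
    have := congrArg Multiplicative.toAdd h
    rw [toAdd_pow, toAdd_one, nsmul_eq_mul] at this
    exact this
  rcases mul_eq_zero.1 h1 with h | h
  · exact absurd (by exact_mod_cast h) hm.ne'
  · exact hz (Multiplicative.toAdd.injective (by simpa using h))

/-- Lemma 6.3. Let `Γ` be an `n`-crystallographic group and `G` a maximal
virtually infinite cyclic subgroup of `Γ × ℤ`, with `π : Γ × ℤ → Γ` the projection.  Then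
either `π` is injective on `G` (so `G` is isomorphic to the virtually infinite cyclic subgroup
`π(G)` of `Γ`), or `G = π(G) × ℤ` with `π(G)` a maximal finite subgroup of `Γ`. -/
theorem maximal_vic_of_product {n : ℕ}
    (Γ : Subgroup (Isom n)) (hΓ : IsCrystallographic Γ)
    (G : Subgroup (Γ × Multiplicative ℤ))
    (hvc : IsVirtuallyInfiniteCyclic G)
    (hmax : ∀ G' : Subgroup (Γ × Multiplicative ℤ), G ≤ G' →
      IsVirtuallyInfiniteCyclic G' → G = G') :
    (Set.InjOn (MonoidHom.fst Γ (Multiplicative ℤ)) (G : Set (Γ × Multiplicative ℤ)) ∧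
      Nonempty (G ≃* Subgroup.map (MonoidHom.fst Γ (Multiplicative ℤ)) G) ∧
      IsVirtuallyInfiniteCyclic (Subgroup.map (MonoidHom.fst Γ (Multiplicative ℤ)) G)) ∨
    (G = (Subgroup.map (MonoidHom.fst Γ (Multiplicative ℤ)) G).prod
        (⊤ : Subgroup (Multiplicative ℤ)) ∧
      Finite (Subgroup.map (MonoidHom.fst Γ (Multiplicative ℤ)) G) ∧
      ∀ F' : Subgroup Γ, Subgroup.map (MonoidHom.fst Γ (Multiplicative ℤ)) G ≤ F' →
        Finite F' → Subgroup.map (MonoidHom.fst Γ (Multiplicative ℤ)) G = F') := by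
  classical
  set π := MonoidHom.fst Γ (Multiplicative ℤ) with hπ
  have hrange : (π.comp G.subtype).range = Subgroup.map π G := by
    rw [MonoidHom.range_comp, Subgroup.range_subtype]
  by_cases hinj : Set.InjOn π (G : Set (Γ × Multiplicative ℤ))
  · left
    have hf : Function.Injective (π.comp G.subtype) := by
      intro x y h
      exact Subtype.ext (hinj x.2 y.2 h)
    exact ⟨hinj, ⟨(MonoidHom.ofInjective hf).trans (MulEquiv.subgroupCongr hrange)⟩,
      vic_congr ((MonoidHom.ofInjective hf).trans (MulEquiv.subgroupCongr hrange)) hvc⟩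
  · right
    rw [Set.InjOn] at hinj
    push_neg at hinj
    obtain ⟨x, hx, y, hy, hxy, hne⟩ := hinj
    have hg0mem : x * y⁻¹ ∈ G := G.mul_mem hx (G.inv_mem hy)
    have hg01 : (x * y⁻¹).1 = 1 := by
      have : x.1 = y.1 := hxy
      simp [this]
    have hz : (x * y⁻¹).2 ≠ 1 := by
      intro h1
      apply hne
      have : x * y⁻¹ = 1 := Prod.ext hg01 h1
      rw [mul_inv_eq_one] at this
      exact this
    set g' : G := ⟨x * y⁻¹, hg0mem⟩ with hg'
    have hford : ¬ IsOfFinOrder g' := by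
      intro hford
      obtain ⟨m, hm, hpow⟩ := isOfFinOrder_iff_pow_eq_one.1 hford
      have h1 : (x * y⁻¹) ^ m = 1 := congrArg Subtype.val hpow
      have h2 : ((x * y⁻¹).2) ^ m = 1 := by
        have := congrArg Prod.snd h1
        simpa using this
      exact mult_int_pow_ne _ hz m hm h2
    obtain ⟨k, hkpos, hfi⟩ := key_fi hvc hford
    haveI := hfi
    have hker : Subgroup.zpowers (g' ^ k) ≤ (π.comp G.subtype).ker := by
      rw [Subgroup.zpowers_le, MonoidHom.mem_ker]
      have hg'1 : (π.comp G.subtype) g' = 1 := hg01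
      rw [map_pow, hg'1, one_pow]
    haveI : (π.comp G.subtype).ker.FiniteIndex := Subgroup.finiteIndex_of_le hker
    have hfin : Finite (Subgroup.map π G) := by
      have h1 : Nat.card (π.comp G.subtype).range ≠ 0 := by
        rw [← Subgroup.index_ker]
        exact Subgroup.FiniteIndex.index_ne_zero
      have h2 := (Nat.card_ne_zero.1 h1).2
      exact hrange ▸ h2
    haveI := hfin
    have hle : G ≤ (Subgroup.map π G).prod ⊤ := fun a ha =>
      Subgroup.mem_prod.2 ⟨Subgroup.mem_map.2 ⟨a, ha, rfl⟩, trivial⟩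
    have hvic' : IsVirtuallyInfiniteCyclic ((Subgroup.map π G).prod ⊤) :=
      vic_congr ((Subgroup.prodEquiv (Subgroup.map π G) ⊤).trans
        (MulEquiv.prodCongr (MulEquiv.refl (↥(Subgroup.map π G))) (Subgroup.topEquiv : (⊤ : Subgroup (Multiplicative ℤ)) ≃* Multiplicative ℤ))).symm
        (vic_prod (↥(Subgroup.map π G)))
    have hG' := hmax _ hle hvic'
    refine ⟨hG', hfin, ?_⟩
    intro F' hFF' hFin'
    haveI := hFin'
    have hle2 : G ≤ F'.prod ⊤ := le_trans hle (Subgroup.prod_mono hFF' le_rfl)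
    have hvic2 : IsVirtuallyInfiniteCyclic (F'.prod ⊤ :
        Subgroup (Γ × Multiplicative ℤ)) :=
      vic_congr ((Subgroup.prodEquiv F' ⊤).trans
        (MulEquiv.prodCongr (MulEquiv.refl (↥F')) (Subgroup.topEquiv : (⊤ : Subgroup (Multiplicative ℤ)) ≃* Multiplicative ℤ))).symm (vic_prod (↥F'))
    have hG2 := hmax _ hle2 hvic2
    ext γ
    constructor
    · intro h; exact hFF' h
    · intro h
      have hmem : ((γ, (1 : Multiplicative ℤ)) : Γ × Multiplicative ℤ) ∈ F'.prod ⊤ :=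
        Subgroup.mem_prod.2 ⟨h, trivial⟩
      rw [← hG2, hG'] at hmem
      exact (Subgroup.mem_prod.1 hmem).1
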